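/- Let 𝒱 be a finite index set with distributions {P_v}_{v∈𝒱} on a finite set X, V uniform on 𝒱, and U the uniform mixture. Suppose that for every (ε,δ)-differentially private single-input randomized map M : X → R we have I(M(P_V); V) ≤ I₀. If M is an online algorithm on streams of length n such that for every t and every pair of neighboring streams the joint distribution of (internal state at time t, final output) satisfies (ε,δ)-differential privacy (pan-privacy), then dTV(M(P_V^n), M(U^n)) ≤ n·√(I₀/2). -/

import Mathlib

open Finset

def IsDist {α : Type*} [Fintype α] (p : α → ℝ) : Prop :=
  (∀ x, 0 ≤ p x) ∧ ∑ x, p x = 1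

noncomputable def dTV {α : Type*} [Fintype α] (p q : α → ℝ) : ℝ :=
  (1 / 2) * ∑ x, |p x - q x|

def IsDP {X R : Type*} [Fintype X] [Fintype R] (M : X → R → ℝ) (ε δ : ℝ) : Prop :=
  ∀ x x' : X, ∀ C : Finset R, ∑ r ∈ C, M x r ≤ Real.exp ε * ∑ r ∈ C, M x' r + δ

noncomputable def mutualInfo {α β : Type*} [Fintype α] [Fintype β]
    (j : α × β → ℝ) : ℝ :=
  ∑ p : α × β,
    if j p = 0 then 0
    else j p * Real.log (j p / ((∑ b, j (p.1, b)) * (∑ a, j (a, p.2))))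

/-- State distribution of the online algorithm after step `i` on independent inputs
with the `j`-th input drawn from `q j`. -/
noncomputable def stateDist {X S : Type*} [Fintype X] [Fintype S]
    (M1 : X → S → ℝ) (Mst : ℕ → S → X → S → ℝ) (q : ℕ → X → ℝ) : ℕ → S → ℝ
  | 0 => fun s => ∑ x, q 0 x * M1 x s
  | (i + 1) => fun s =>
      ∑ s', stateDist M1 Mst q i s' * ∑ x, q (i + 1) x * Mst (i + 1) s' x s

/-- State distribution on a fixed (deterministic) stream `x`. -/
noncomputable def detState {X S : Type*} [Fintype S]
    (M1 : X → S → ℝ) (Mst : ℕ → S → X → S → ℝ) (x : ℕ → X) : ℕ → S → ℝ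
  | 0 => M1 (x 0)
  | (i + 1) => fun s => ∑ s', detState M1 Mst x i s' * Mst (i + 1) s' (x (i + 1)) s

/-- Distribution of the state `j` steps after time `t`, started from state `s0`,
on the fixed stream `x`. -/
noncomputable def fwd {X S : Type*} [Fintype S] [DecidableEq S]
    (Mst : ℕ → S → X → S → ℝ) (x : ℕ → X) (t : ℕ) (s0 : S) : ℕ → S → ℝ
  | 0 => fun s => if s = s0 then 1 else 0
  | (j + 1) => fun s =>
      ∑ s', fwd Mst x t s0 j s' * Mst (t + j + 1) s' (x (t + j + 1)) s

/-- The adversary's view on stream `x` with intrusion at time `t` (for streams of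
length `n`): the joint distribution of the internal state at time `t` and the final
output. -/
noncomputable def view {X S O : Type*} [Fintype S] [DecidableEq S] [Fintype O]
    (M1 : X → S → ℝ) (Mst : ℕ → S → X → S → ℝ) (Mout : S → O → ℝ)
    (n : ℕ) (x : ℕ → X) (t : ℕ) : S × O → ℝ :=
  fun p => detState M1 Mst x t p.1 *
    ∑ sf, fwd Mst x t p.1 (n - 1 - t) sf * Mout sf p.2

/-- Pan-privacy of an online algorithm on streams of length `n`: for every intrusion
time and every pair of neighboring streams, the joint distribution of (state at the
intrusion time, final output) is `(ε,δ)`-indistinguishable. -/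
def PanPrivate {X S O : Type} [Fintype S] [DecidableEq S] [Fintype O]
    (M1 : X → S → ℝ) (Mst : ℕ → S → X → S → ℝ) (Mout : S → O → ℝ)
    (n : ℕ) (ε δ : ℝ) : Prop :=
  ∀ t < n, ∀ x x' : ℕ → X, (∃ i0 : ℕ, ∀ i, i ≠ i0 → x i = x' i) →
    ∀ C : Finset (S × O),
      ∑ p ∈ C, view M1 Mst Mout n x t p ≤
        Real.exp ε * ∑ p ∈ C, view M1 Mst Mout n x' t p + δ




noncomputable def phiAux (x : ℝ) : ℝ := Real.log x - 3*(x-1)*(x+5)/(2*(x+2)^2)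

noncomputable def hAux (t : ℝ) : ℝ := t * Real.log t - t + 1 - 3*(t-1)^2/(2*t+4)

lemma phiAux_hasDeriv {x : ℝ} (hx : 0 < x) :
    HasDerivAt phiAux ((x-1)^2*(x+8)/(x*(x+2)^3)) x := by
  have hlog : HasDerivAt Real.log x⁻¹ x := Real.hasDerivAt_log hx.ne'
  have h1 : HasDerivAt (fun x : ℝ => 3*(x-1)*(x+5)) (3*1*(x+5) + 3*(x-1)*1) x :=
    (((hasDerivAt_id x).sub_const 1).const_mul 3).mul ((hasDerivAt_id x).add_const 5)
  have h2 : HasDerivAt (fun x : ℝ => 2*(x+2)^2) (2*((2:ℕ)*(x+2)^1*1)) x :=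
    (((hasDerivAt_id x).add_const 2).pow 2).const_mul 2
  have hden : (2*(x+2)^2 : ℝ) ≠ 0 := by positivity
  have h3 := h1.div h2 hden
  have h4 := hlog.sub h3
  refine h4.congr_deriv ?_
  have hx0 : (x : ℝ) ≠ 0 := hx.ne'
  have hx2 : (x + 2 : ℝ) ≠ 0 := by positivity
  field_simp
  ring

lemma phiAux_one : phiAux 1 = 0 := by simp [phiAux]

lemma phiAux_mono : MonotoneOn phiAux (Set.Ioi (0:ℝ)) := by
  have : ∀ x ∈ interior (Set.Ioi (0:ℝ)),
      HasDerivWithinAt phiAux ((x-1)^2*(x+8)/(x*(x+2)^3)) (interior (Set.Ioi (0:ℝ))) x := by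
    intro x hx
    rw [interior_Ioi] at hx
    exact (phiAux_hasDeriv hx).hasDerivWithinAt
  refine monotoneOn_of_hasDerivWithinAt_nonneg (convex_Ioi 0) ?_ this ?_
  · intro x hx
    exact (phiAux_hasDeriv hx).continuousAt.continuousWithinAt
  · intro x hx
    rw [interior_Ioi] at hx
    have hx' : (0:ℝ) < x := hx
    positivity

lemma phiAux_nonneg {x : ℝ} (hx : 1 ≤ x) : 0 ≤ phiAux x := by
  rw [← phiAux_one]
  exact phiAux_mono (by norm_num) (by simp; linarith) hx

lemma phiAux_nonpos {x : ℝ} (hx0 : 0 < x) (hx : x ≤ 1) : phiAux x ≤ 0 := by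
  rw [← phiAux_one]
  exact phiAux_mono hx0 (by norm_num) hx

lemma hAux_hasDeriv {t : ℝ} (ht : 0 < t) : HasDerivAt hAux (phiAux t) t := by
  have hlog : HasDerivAt Real.log t⁻¹ t := Real.hasDerivAt_log ht.ne'
  have h0 : HasDerivAt (fun t : ℝ => t * Real.log t) (1 * Real.log t + t * t⁻¹) t :=
    (hasDerivAt_id t).mul hlog
  have h1 : HasDerivAt (fun t : ℝ => 3*(t-1)^2) (3*((2:ℕ)*(t-1)^1*1)) t :=
    (((hasDerivAt_id t).sub_const 1).pow 2).const_mul 3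
  have h2 : HasDerivAt (fun t : ℝ => 2*t+4) (2*1) t :=
    ((hasDerivAt_id t).const_mul 2).add_const 4
  have hden : (2*t+4 : ℝ) ≠ 0 := by positivity
  have h3 := h1.div h2 hden
  have h4 := ((h0.sub (hasDerivAt_id t)).add_const 1).sub h3
  refine h4.congr_deriv ?_
  have ht0 : (t : ℝ) ≠ 0 := ht.ne'
  have ht2 : (t + 2 : ℝ) ≠ 0 := by positivity
  unfold phiAux
  field_simp
  ring

lemma hAux_one : hAux 1 = 0 := by norm_num [hAux]

lemma hAux_nonneg {t : ℝ} (ht : 0 < t) : 0 ≤ hAux t := by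
  rcases le_total 1 t with h | h
  · have mono : MonotoneOn hAux (Set.Ici (1:ℝ)) := by
      refine monotoneOn_of_hasDerivWithinAt_nonneg (convex_Ici 1) ?_
        (f' := phiAux) ?_ ?_
      · intro x hx
        have : (0:ℝ) < x := lt_of_lt_of_le one_pos hx
        exact (hAux_hasDeriv this).continuousAt.continuousWithinAt
      · intro x hx
        rw [interior_Ici] at hx
        exact (hAux_hasDeriv (lt_trans one_pos hx)).hasDerivWithinAt
      · intro x hx
        rw [interior_Ici] at hx
        exact phiAux_nonneg hx.le
    have := mono (by norm_num) (by simpa using h) h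
    rwa [hAux_one] at this
  · have anti : AntitoneOn hAux (Set.Icc t 1) := by
      refine antitoneOn_of_hasDerivWithinAt_nonpos (convex_Icc t 1) ?_
        (f' := phiAux) ?_ ?_
      · intro x hx
        exact (hAux_hasDeriv (lt_of_lt_of_le ht hx.1)).continuousAt.continuousWithinAt
      · intro x hx
        rw [interior_Icc] at hx
        exact (hAux_hasDeriv (lt_of_lt_of_le ht hx.1.le)).hasDerivWithinAt
      · intro x hx
        rw [interior_Icc] at hx
        exact phiAux_nonpos (lt_trans ht hx.1) hx.2.le
    have := anti (Set.mem_Icc.2 ⟨le_refl t, h⟩) (Set.mem_Icc.2 ⟨h, le_refl 1⟩) h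
    rwa [hAux_one] at this

/-- Pointwise Pinsker-type bound. -/
lemma pointwise_pinsker {x y : ℝ} (hx : 0 ≤ x) (hy : 0 ≤ y) (hdom : y = 0 → x = 0) :
    x - y + 3*(x-y)^2/(2*x+4*y) ≤ (if x = 0 then 0 else x * Real.log (x/y)) := by
  rcases eq_or_lt_of_le hx with hx0 | hx0
  · rw [if_pos hx0.symm, ← hx0]
    rcases eq_or_lt_of_le hy with hy0 | hy0
    · rw [← hy0]; norm_num
    · have : 3*(0-y)^2/(2*0+4*y) = 3*y/4 := by field_simp; ring
      rw [this]; linarith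
  · have hy0 : 0 < y := by
      rcases eq_or_lt_of_le hy with hy0 | hy0
      · exact absurd (hdom hy0.symm) hx0.ne'
      · exact hy0
    rw [if_neg hx0.ne']
    set t := x / y with htdef
    have ht : 0 < t := div_pos hx0 hy0
    have hxt : x = y * t := by rw [htdef]; field_simp
    have key := hAux_nonneg ht
    unfold hAux at key
    have e1 : x - y + 3*(x-y)^2/(2*x+4*y) = y * (t - 1 + 3*(t-1)^2/(2*t+4)) := by
      rw [hxt]
      have h2t : (2*t+4 : ℝ) ≠ 0 := by positivity
      field_simp
    have e2 : x * Real.log t = y * (t * Real.log t) := by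
      rw [hxt]; ring
    rw [e1, e2]
    have : t - 1 + 3*(t-1)^2/(2*t+4) ≤ t * Real.log t := by linarith
    exact mul_le_mul_of_nonneg_left this hy

/-- Finite Pinsker inequality. -/
lemma pinsker_finset {α : Type*} [Fintype α] (j m : α → ℝ)
    (hj0 : ∀ p, 0 ≤ j p) (hm0 : ∀ p, 0 ≤ m p)
    (hj1 : ∑ p, j p = 1) (hm1 : ∑ p, m p = 1)
    (hdom : ∀ p, m p = 0 → j p = 0) :
    (∑ p, |j p - m p|)^2 ≤
      2 * ∑ p, (if j p = 0 then 0 else j p * Real.log (j p / m p)) := by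
  set d : α → ℝ := fun p => 2 * j p + 4 * m p with hd
  have hd0 : ∀ p, 0 ≤ d p := fun p => by
    have := hj0 p; have := hm0 p; simp only [hd]; linarith
  have key1 : ∑ p, (j p - m p + 3*(j p - m p)^2 / d p) ≤
      ∑ p, (if j p = 0 then 0 else j p * Real.log (j p / m p)) := by
    apply Finset.sum_le_sum
    intro p _
    have := pointwise_pinsker (hj0 p) (hm0 p) (hdom p)
    simpa [hd] using this
  have key2 : ∑ p, (j p - m p) = 0 := by
    rw [Finset.sum_sub_distrib, hj1, hm1]; ring
  have key3 : ∑ p, 3*(j p - m p)^2 / d p ≤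
      ∑ p, (if j p = 0 then 0 else j p * Real.log (j p / m p)) := by
    have : ∑ p, (j p - m p + 3*(j p - m p)^2 / d p) =
        ∑ p, (j p - m p) + ∑ p, 3*(j p - m p)^2 / d p := by
      rw [Finset.sum_add_distrib]
    linarith [key1, this ▸ key1]
  -- Cauchy–Schwarz
  set f : α → ℝ := fun p => |j p - m p| / Real.sqrt (d p) with hf
  set g : α → ℝ := fun p => Real.sqrt (d p) with hg
  have hfg : ∀ p, f p * g p = |j p - m p| := by
    intro p
    rcases eq_or_lt_of_le (hd0 p) with h | h
    · have hj : j p = 0 := by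
        have := hj0 p; have := hm0 p; simp only [hd] at h; linarith
      have hm : m p = 0 := by
        have := hj0 p; have := hm0 p; simp only [hd] at h; linarith
      simp [hf, hg, hj, hm]
    · have : Real.sqrt (d p) ≠ 0 := by positivity
      simp only [hf, hg]; field_simp
  have hcs := Finset.sum_mul_sq_le_sq_mul_sq Finset.univ f g
  have hf2 : ∀ p, f p ^ 2 = (j p - m p)^2 / d p := by
    intro p
    rw [hf]
    rw [div_pow, sq_abs, Real.sq_sqrt (hd0 p)]
  have hg2 : ∀ p, g p ^ 2 = d p := fun p => Real.sq_sqrt (hd0 p)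
  have hsum_d : ∑ p, d p = 6 := by
    simp only [hd]
    rw [Finset.sum_add_distrib, ← Finset.mul_sum, ← Finset.mul_sum, hj1, hm1]
    norm_num
  have e1 : ∑ p, f p * g p = ∑ p, |j p - m p| := Finset.sum_congr rfl fun p _ => hfg p
  have e2 : ∑ p, f p ^ 2 = ∑ p, (j p - m p)^2 / d p :=
    Finset.sum_congr rfl fun p _ => hf2 p
  have e3 : ∑ p, g p ^ 2 = 6 := by
    rw [Finset.sum_congr rfl fun p _ => hg2 p, hsum_d]
  rw [e1, e2, e3] at hcs
  have h3 : ∑ p, 3*(j p - m p)^2 / d p = 3 * ∑ p, (j p - m p)^2 / d p := by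
    rw [Finset.mul_sum]
    exact Finset.sum_congr rfl fun p _ => by rw [mul_div_assoc]
  rw [h3] at key3
  linarith

/-- Pinsker for mutual information. -/
lemma pinsker_mi {α V : Type*} [Fintype α] [Fintype V] (j : α × V → ℝ)
    (hj0 : ∀ p, 0 ≤ j p) (hj1 : ∑ p, j p = 1) :
    (∑ p : α × V, |j p - (∑ b, j (p.1, b)) * (∑ a, j (a, p.2))|)^2 ≤
      2 * mutualInfo j := by
  set m : α × V → ℝ := fun p => (∑ b, j (p.1, b)) * (∑ a, j (a, p.2)) with hm
  have hm0 : ∀ p, 0 ≤ m p := fun p =>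
    mul_nonneg (Finset.sum_nonneg fun b _ => hj0 _) (Finset.sum_nonneg fun a _ => hj0 _)
  have hm1 : ∑ p, m p = 1 := by
    simp only [hm]
    rw [Fintype.sum_prod_type]
    have : ∀ a : α, ∑ v : V, (∑ b, j (a, b)) * (∑ a', j (a', v)) =
        (∑ b, j (a, b)) * ∑ v : V, (∑ a', j (a', v)) := fun a => by
      rw [Finset.mul_sum]
    rw [Finset.sum_congr rfl fun a _ => this a, ← Finset.sum_mul]
    have h1 : ∑ a : α, ∑ b : V, j (a, b) = 1 := by rw [← Fintype.sum_prod_type]; exact hj1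
    have h2 : ∑ v : V, ∑ a : α, j (a, v) = 1 := by
      rw [Finset.sum_comm, ← Fintype.sum_prod_type]; exact hj1
    rw [h1, h2, one_mul]
  have hdom : ∀ p, m p = 0 → j p = 0 := by
    intro p hp
    by_contra hjp
    have hjpos : 0 < j p := lt_of_le_of_ne (hj0 p) (Ne.symm hjp)
    have h1 : j p ≤ ∑ b, j (p.1, b) :=
      Finset.single_le_sum (f := fun b => j (p.1, b)) (fun b _ => hj0 (p.1, b)) (Finset.mem_univ p.2)
    have h2 : j p ≤ ∑ a, j (a, p.2) :=
      Finset.single_le_sum (f := fun a => j (a, p.2)) (fun a _ => hj0 (a, p.2)) (Finset.mem_univ p.1)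
    have : 0 < m p := mul_pos (lt_of_lt_of_le hjpos h1) (lt_of_lt_of_le hjpos h2)
    exact this.ne' hp
  have h := pinsker_finset j m hj0 hm0 hj1 hm1 hdom
  unfold mutualInfo
  exact h

set_option linter.unusedSectionVars false

section Framework

variable {X S O : Type} [Fintype X] [Fintype S] [Fintype O] [DecidableEq X] [DecidableEq S]

/-- point mass at `x`. -/
def dirac (x : X) : X → ℝ := fun x' => if x' = x then 1 else 0

lemma dirac_isDist (x : X) : IsDist (dirac x) := by
  constructor
  · intro x'; unfold dirac; split <;> norm_num
  · simp [dirac]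

lemma sum_dirac_mul (x : X) (f : X → ℝ) : ∑ x', dirac x x' * f x' = f x := by
  simp [dirac, ite_mul]

variable (Mst : ℕ → S → X → S → ℝ)

/-- averaged forward kernel -/
noncomputable def mFwd (q : ℕ → X → ℝ) (t : ℕ) (s0 : S) : ℕ → S → ℝ
  | 0 => fun s => if s = s0 then 1 else 0
  | (j + 1) => fun s =>
      ∑ s', mFwd q t s0 j s' * ∑ x, q (t + j + 1) x * Mst (t + j + 1) s' x s

variable (M1 : X → S → ℝ)

lemma stateDist_nonneg (hM1 : ∀ x, IsDist (M1 x)) (hMst : ∀ i s x, IsDist (Mst i s x))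
    (q : ℕ → X → ℝ) (hq : ∀ i x, 0 ≤ q i x) (t : ℕ) (s : S) :
    0 ≤ stateDist M1 Mst q t s := by
  induction t generalizing s with
  | zero =>
    exact Finset.sum_nonneg fun x _ => mul_nonneg (hq 0 x) ((hM1 x).1 s)
  | succ t ih =>
    exact Finset.sum_nonneg fun s' _ => mul_nonneg (ih s')
      (Finset.sum_nonneg fun x _ => mul_nonneg (hq _ x) ((hMst _ s' x).1 s))

lemma stateDist_sum (hM1 : ∀ x, IsDist (M1 x)) (hMst : ∀ i s x, IsDist (Mst i s x))
    (q : ℕ → X → ℝ) (hq : ∀ i, IsDist (q i)) (t : ℕ) :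
    ∑ s, stateDist M1 Mst q t s = 1 := by
  induction t with
  | zero =>
    show ∑ s, ∑ x, q 0 x * M1 x s = 1
    rw [Finset.sum_comm]
    have : ∀ x : X, ∑ s, q 0 x * M1 x s = q 0 x := fun x => by
      rw [← Finset.mul_sum, (hM1 x).2, mul_one]
    rw [Finset.sum_congr rfl fun x _ => this x]
    exact (hq 0).2
  | succ t ih =>
    show ∑ s, ∑ s', stateDist M1 Mst q t s' * ∑ x, q (t+1) x * Mst (t+1) s' x s = 1
    rw [Finset.sum_comm]
    have : ∀ s' : S, ∑ s, stateDist M1 Mst q t s' * ∑ x, q (t+1) x * Mst (t+1) s' x s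
        = stateDist M1 Mst q t s' := by
      intro s'
      rw [← Finset.mul_sum]
      have : ∑ s, ∑ x, q (t+1) x * Mst (t+1) s' x s = 1 := by
        rw [Finset.sum_comm]
        have : ∀ x : X, ∑ s, q (t+1) x * Mst (t+1) s' x s = q (t+1) x := fun x => by
          rw [← Finset.mul_sum, (hMst (t+1) s' x).2, mul_one]
        rw [Finset.sum_congr rfl fun x _ => this x]
        exact (hq (t+1)).2
      rw [this, mul_one]
    rw [Finset.sum_congr rfl fun s' _ => this s']
    exact ih

lemma mFwd_nonneg (hMst : ∀ i s x, IsDist (Mst i s x))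
    (q : ℕ → X → ℝ) (hq : ∀ i x, 0 ≤ q i x) (t : ℕ) (s0 : S) (j : ℕ) (s : S) :
    0 ≤ mFwd Mst q t s0 j s := by
  induction j generalizing s with
  | zero => show (0:ℝ) ≤ if s = s0 then 1 else 0; split <;> norm_num
  | succ j ih =>
    exact Finset.sum_nonneg fun s' _ => mul_nonneg (ih s')
      (Finset.sum_nonneg fun x _ => mul_nonneg (hq _ x) ((hMst _ s' x).1 s))

lemma mFwd_sum (hMst : ∀ i s x, IsDist (Mst i s x))
    (q : ℕ → X → ℝ) (hq : ∀ i, IsDist (q i)) (t : ℕ) (s0 : S) (j : ℕ) :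
    ∑ s, mFwd Mst q t s0 j s = 1 := by
  induction j with
  | zero => simp [mFwd]
  | succ j ih =>
    show ∑ s, ∑ s', mFwd Mst q t s0 j s' * ∑ x, q (t+j+1) x * Mst (t+j+1) s' x s = 1
    rw [Finset.sum_comm]
    have : ∀ s' : S, ∑ s, mFwd Mst q t s0 j s' * ∑ x, q (t+j+1) x * Mst (t+j+1) s' x s
        = mFwd Mst q t s0 j s' := by
      intro s'
      rw [← Finset.mul_sum]
      have : ∑ s, ∑ x, q (t+j+1) x * Mst (t+j+1) s' x s = 1 := by
        rw [Finset.sum_comm]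
        have : ∀ x : X, ∑ s, q (t+j+1) x * Mst (t+j+1) s' x s = q (t+j+1) x := fun x => by
          rw [← Finset.mul_sum, (hMst (t+j+1) s' x).2, mul_one]
        rw [Finset.sum_congr rfl fun x _ => this x]
        exact (hq (t+j+1)).2
      rw [this, mul_one]
    rw [Finset.sum_congr rfl fun s' _ => this s']
    exact ih

lemma stateDist_mFwd (q : ℕ → X → ℝ) (t j : ℕ) (sf : S) :
    ∑ s, stateDist M1 Mst q t s * mFwd Mst q t s j sf = stateDist M1 Mst q (t + j) sf := by
  induction j generalizing sf with
  | zero =>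
    show ∑ s, stateDist M1 Mst q t s * (if sf = s then 1 else 0) = _
    simp [mul_ite]
  | succ j ih =>
    show ∑ s, stateDist M1 Mst q t s *
        ∑ s', mFwd Mst q t s j s' * ∑ x, q (t+j+1) x * Mst (t+j+1) s' x sf = _
    have e : ∀ s, stateDist M1 Mst q t s *
        ∑ s', mFwd Mst q t s j s' * ∑ x, q (t+j+1) x * Mst (t+j+1) s' x sf
        = ∑ s', stateDist M1 Mst q t s * mFwd Mst q t s j s' *
            ∑ x, q (t+j+1) x * Mst (t+j+1) s' x sf := by
      intro s; rw [Finset.mul_sum]; exact Finset.sum_congr rfl fun s' _ => by ring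
    rw [Finset.sum_congr rfl fun s _ => e s, Finset.sum_comm]
    have e2 : ∀ s', ∑ s, stateDist M1 Mst q t s * mFwd Mst q t s j s' *
        ∑ x, q (t+j+1) x * Mst (t+j+1) s' x sf
        = stateDist M1 Mst q (t+j) s' * ∑ x, q (t+j+1) x * Mst (t+j+1) s' x sf := by
      intro s'
      rw [← Finset.sum_mul, ih]
    rw [Finset.sum_congr rfl fun s' _ => e2 s']
    rfl

lemma stateDist_congr (q q' : ℕ → X → ℝ) (t : ℕ) (h : ∀ i ≤ t, q i = q' i) :
    stateDist M1 Mst q t = stateDist M1 Mst q' t := by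
  induction t with
  | zero =>
    show (fun s => ∑ x, q 0 x * M1 x s) = _
    rw [h 0 (le_refl 0)]; rfl
  | succ t ih =>
    funext s
    show (∑ s', stateDist M1 Mst q t s' * ∑ x, q (t+1) x * Mst (t+1) s' x s) = _
    rw [ih (fun i hi => h i (le_trans hi (Nat.le_succ t))), h (t+1) (le_refl _)]; rfl

lemma mFwd_congr (q q' : ℕ → X → ℝ) (t : ℕ) (s0 : S) (j : ℕ)
    (h : ∀ i, t + 1 ≤ i → i ≤ t + j → q i = q' i) :
    mFwd Mst q t s0 j = mFwd Mst q' t s0 j := by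
  induction j with
  | zero => rfl
  | succ j ih =>
    funext s
    show (∑ s', mFwd Mst q t s0 j s' * ∑ x, q (t+j+1) x * Mst (t+j+1) s' x s) = _
    rw [ih (fun i h1 h2 => h i h1 (le_trans h2 (by omega))),
      h (t+j+1) (by omega) (by omega)]; rfl

lemma stateDist_delta (y : ℕ → X) (t : ℕ) :
    stateDist M1 Mst (fun i => dirac (y i)) t = detState M1 Mst y t := by
  induction t with
  | zero =>
    funext s
    show ∑ x, dirac (y 0) x * M1 x s = M1 (y 0) s
    exact sum_dirac_mul (y 0) (fun x => M1 x s)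
  | succ t ih =>
    funext s
    show (∑ s', stateDist M1 Mst (fun i => dirac (y i)) t s' *
        ∑ x, dirac (y (t+1)) x * Mst (t+1) s' x s) = _
    rw [ih]
    exact Finset.sum_congr rfl fun s' _ => by
      rw [sum_dirac_mul (y (t+1)) (fun x => Mst (t+1) s' x s)]

lemma mFwd_delta (y : ℕ → X) (t : ℕ) (s0 : S) (j : ℕ) :
    mFwd Mst (fun i => dirac (y i)) t s0 j = fwd Mst y t s0 j := by
  induction j with
  | zero => rfl
  | succ j ih =>
    funext s
    show (∑ s', mFwd Mst (fun i => dirac (y i)) t s0 j s' *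
        ∑ x, dirac (y (t+j+1)) x * Mst (t+j+1) s' x s) = _
    rw [ih]
    exact Finset.sum_congr rfl fun s' _ => by
      rw [sum_dirac_mul (y (t+j+1)) (fun x => Mst (t+j+1) s' x s)]

lemma swap_helper {A B : Type*} [Fintype A] [Fintype B] (a : A → ℝ) (f : A → B → ℝ)
    (c : B → ℝ) :
    ∑ x, a x * ∑ b, f x b * c b = ∑ b, (∑ x, a x * f x b) * c b := by
  simp only [Finset.mul_sum, Finset.sum_mul]
  rw [Finset.sum_comm]
  exact Finset.sum_congr rfl fun b _ => Finset.sum_congr rfl fun x _ => by ring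

lemma swap_helper2 {A B : Type*} [Fintype A] [Fintype B] (a : A → ℝ) (g : B → ℝ)
    (f : A → B → ℝ) :
    ∑ x, a x * ∑ b, g b * f x b = ∑ b, g b * ∑ x, a x * f x b := by
  simp only [Finset.mul_sum]
  rw [Finset.sum_comm]
  exact Finset.sum_congr rfl fun b _ => Finset.sum_congr rfl fun x _ => by ring

lemma stateDist_linear (q : ℕ → X → ℝ) (i t : ℕ) (hit : i ≤ t) (s : S) :
    ∑ x, q i x * stateDist M1 Mst (Function.update q i (dirac x)) t s
      = stateDist M1 Mst q t s := by
  induction t generalizing s with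
  | zero =>
    have hi0 : i = 0 := Nat.le_zero.mp hit
    subst hi0
    have e : ∀ x : X, stateDist M1 Mst (Function.update q 0 (dirac x)) 0 s = M1 x s := by
      intro x
      show ∑ x', Function.update q 0 (dirac x) 0 x' * M1 x' s = _
      rw [Function.update_self]
      exact sum_dirac_mul x (fun x' => M1 x' s)
    rw [Finset.sum_congr rfl fun x _ => by rw [e x]]
    rfl
  | succ t ih =>
    rcases Nat.lt_or_ge i (t+1) with hlt | hge
    · have hit' : i ≤ t := Nat.lt_succ_iff.mp hlt
      have e : ∀ x : X, stateDist M1 Mst (Function.update q i (dirac x)) (t+1) s =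
          ∑ s', stateDist M1 Mst (Function.update q i (dirac x)) t s' *
            ∑ x', q (t+1) x' * Mst (t+1) s' x' s := by
        intro x
        show (∑ s', stateDist M1 Mst (Function.update q i (dirac x)) t s' *
          ∑ x', Function.update q i (dirac x) (t+1) x' * Mst (t+1) s' x' s) = _
        rw [Function.update_of_ne (by omega : (t+1:ℕ) ≠ i)]
      rw [Finset.sum_congr rfl fun x _ => by rw [e x]]
      rw [swap_helper (fun x => q i x)
        (fun x s' => stateDist M1 Mst (Function.update q i (dirac x)) t s')
        (fun s' => ∑ x', q (t+1) x' * Mst (t+1) s' x' s)]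
      rw [Finset.sum_congr rfl fun s' _ => by rw [ih hit' s']]
      rfl
    · have hieq : i = t + 1 := le_antisymm hit hge
      subst hieq
      have e : ∀ x : X, stateDist M1 Mst (Function.update q (t+1) (dirac x)) (t+1) s =
          ∑ s', stateDist M1 Mst q t s' * Mst (t+1) s' x s := by
        intro x
        show (∑ s', stateDist M1 Mst (Function.update q (t+1) (dirac x)) t s' *
          ∑ x', Function.update q (t+1) (dirac x) (t+1) x' * Mst (t+1) s' x' s) = _
        rw [stateDist_congr Mst M1 _ q t
          (fun i hi => Function.update_of_ne (by omega) _ _)]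
        rw [Function.update_self]
        exact Finset.sum_congr rfl fun s' _ => by
          rw [sum_dirac_mul x (fun x' => Mst (t+1) s' x' s)]
      rw [Finset.sum_congr rfl fun x _ => by rw [e x]]
      rw [swap_helper2 (fun x => q (t+1) x) (fun s' => stateDist M1 Mst q t s')
        (fun x s' => Mst (t+1) s' x s)]
      rfl

lemma mFwd_linear (q : ℕ → X → ℝ) (i t : ℕ) (hit : t + 1 ≤ i)
    (hq1 : ∑ x, q i x = 1) (s0 : S) (j : ℕ) (sf : S) :
    ∑ x, q i x * mFwd Mst (Function.update q i (dirac x)) t s0 j sf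
      = mFwd Mst q t s0 j sf := by
  induction j generalizing sf with
  | zero =>
    show ∑ x, q i x * (if sf = s0 then 1 else 0) = (if sf = s0 then 1 else 0)
    rw [← Finset.sum_mul, hq1, one_mul]
  | succ j ih =>
    rcases eq_or_ne i (t+j+1) with heq | hne
    · subst heq
      have e : ∀ x : X, mFwd Mst (Function.update q (t+j+1) (dirac x)) t s0 (j+1) sf =
          ∑ s', mFwd Mst q t s0 j s' * Mst (t+j+1) s' x sf := by
        intro x
        show (∑ s', mFwd Mst (Function.update q (t+j+1) (dirac x)) t s0 j s' *
          ∑ x', Function.update q (t+j+1) (dirac x) (t+j+1) x' * Mst (t+j+1) s' x' sf) = _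
        rw [mFwd_congr Mst _ q t s0 j
          (fun i h1 h2 => Function.update_of_ne (by omega) _ _)]
        rw [Function.update_self]
        exact Finset.sum_congr rfl fun s' _ => by
          rw [sum_dirac_mul x (fun x' => Mst (t+j+1) s' x' sf)]
      rw [Finset.sum_congr rfl fun x _ => by rw [e x]]
      rw [swap_helper2 (fun x => q (t+j+1) x) (fun s' => mFwd Mst q t s0 j s')
        (fun x s' => Mst (t+j+1) s' x sf)]
      rfl
    · have e : ∀ x : X, mFwd Mst (Function.update q i (dirac x)) t s0 (j+1) sf =
          ∑ s', mFwd Mst (Function.update q i (dirac x)) t s0 j s' *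
            ∑ x', q (t+j+1) x' * Mst (t+j+1) s' x' sf := by
        intro x
        show (∑ s', mFwd Mst (Function.update q i (dirac x)) t s0 j s' *
          ∑ x', Function.update q i (dirac x) (t+j+1) x' * Mst (t+j+1) s' x' sf) = _
        rw [Function.update_of_ne hne.symm]
      rw [Finset.sum_congr rfl fun x _ => by rw [e x]]
      rw [swap_helper (fun x => q i x)
        (fun x s' => mFwd Mst (Function.update q i (dirac x)) t s0 j s')
        (fun s' => ∑ x', q (t+j+1) x' * Mst (t+j+1) s' x' sf)]
      rw [Finset.sum_congr rfl fun s' _ => by rw [ih s']]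
      rfl

variable (Mout : S → O → ℝ)

/-- generalized view with per-coordinate input distributions -/
noncomputable def mixView (n : ℕ) (q : ℕ → X → ℝ) (t : ℕ) : S × O → ℝ :=
  fun p => stateDist M1 Mst q t p.1 *
    ∑ sf, mFwd Mst q t p.1 (n - 1 - t) sf * Mout sf p.2

lemma mixView_delta (n : ℕ) (y : ℕ → X) (t : ℕ) :
    mixView Mst M1 Mout n (fun i => dirac (y i)) t = view M1 Mst Mout n y t := by
  funext p
  unfold mixView view
  rw [stateDist_delta, mFwd_delta]

lemma mixView_congr (n : ℕ) (hn : 1 ≤ n) (q q' : ℕ → X → ℝ) (t : ℕ) (ht : t ≤ n - 1)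
    (h : ∀ i < n, q i = q' i) :
    mixView Mst M1 Mout n q t = mixView Mst M1 Mout n q' t := by
  funext p
  unfold mixView
  rw [stateDist_congr Mst M1 q q' t (fun i hi => h i (by omega)),
    mFwd_congr Mst q q' t p.1 (n - 1 - t) (fun i h1 h2 => h i (by omega))]

lemma mixView_linear (n : ℕ) (q : ℕ → X → ℝ) (i t : ℕ) (hq1 : ∑ x, q i x = 1)
    (p : S × O) :
    mixView Mst M1 Mout n q t p
      = ∑ x, q i x * mixView Mst M1 Mout n (Function.update q i (dirac x)) t p := by
  rcases le_or_gt i t with hle | hgt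
  · have hF : ∀ x : X, mFwd Mst (Function.update q i (dirac x)) t p.1 (n-1-t)
        = mFwd Mst q t p.1 (n-1-t) := fun x =>
      mFwd_congr Mst _ q t p.1 (n-1-t) (fun i' h1 h2 => Function.update_of_ne (by omega) _ _)
    symm
    calc ∑ x, q i x * mixView Mst M1 Mout n (Function.update q i (dirac x)) t p
        = ∑ x, (q i x * stateDist M1 Mst (Function.update q i (dirac x)) t p.1) *
            ∑ sf, mFwd Mst q t p.1 (n-1-t) sf * Mout sf p.2 := by
          refine Finset.sum_congr rfl fun x _ => ?_
          unfold mixView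
          rw [hF x]
          ring
      _ = (∑ x, q i x * stateDist M1 Mst (Function.update q i (dirac x)) t p.1) *
            ∑ sf, mFwd Mst q t p.1 (n-1-t) sf * Mout sf p.2 := by
          rw [Finset.sum_mul]
      _ = mixView Mst M1 Mout n q t p := by
          rw [stateDist_linear Mst M1 q i t hle p.1]
          rfl
  · have hS : ∀ x : X, stateDist M1 Mst (Function.update q i (dirac x)) t
        = stateDist M1 Mst q t := fun x =>
      stateDist_congr Mst M1 _ q t (fun i' hi' => Function.update_of_ne (by omega) _ _)
    symm
    calc ∑ x, q i x * mixView Mst M1 Mout n (Function.update q i (dirac x)) t p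
        = ∑ x, stateDist M1 Mst q t p.1 * (q i x *
            ∑ sf, mFwd Mst (Function.update q i (dirac x)) t p.1 (n-1-t) sf * Mout sf p.2) := by
          refine Finset.sum_congr rfl fun x _ => ?_
          unfold mixView
          rw [hS x]
          ring
      _ = stateDist M1 Mst q t p.1 * ∑ x, q i x *
            ∑ sf, mFwd Mst (Function.update q i (dirac x)) t p.1 (n-1-t) sf * Mout sf p.2 := by
          rw [Finset.mul_sum]
      _ = mixView Mst M1 Mout n q t p := by
          rw [swap_helper (fun x => q i x)
            (fun x sf => mFwd Mst (Function.update q i (dirac x)) t p.1 (n-1-t) sf)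
            (fun sf => Mout sf p.2)]
          unfold mixView
          congr 1
          exact Finset.sum_congr rfl fun sf _ => by
            rw [mFwd_linear Mst q i t hgt hq1 p.1 (n-1-t) sf]

lemma mix_dp (n : ℕ) (ε δ : ℝ) (hpan : PanPrivate M1 Mst Mout n ε δ)
    (U : X → ℝ) (hU0 : ∀ x, 0 ≤ U x) (hU1 : ∑ x, U x = 1)
    (t : ℕ) (ht : t < n) (y0 : X) (x x' : X) (C : Finset (S × O)) :
    ∑ p ∈ C, mixView Mst M1 Mout n (Function.update (fun _ => U) t (dirac x)) t p ≤
      Real.exp ε *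
        ∑ p ∈ C, mixView Mst M1 Mout n (Function.update (fun _ => U) t (dirac x')) t p
        + δ := by
  have claim : ∀ j, ∀ y : ℕ → X, ∀ x x' : X, ∀ C : Finset (S × O),
      ∑ p ∈ C, mixView Mst M1 Mout n
          (Function.update (fun i => if i < j then U else dirac (y i)) t (dirac x)) t p ≤
        Real.exp ε * ∑ p ∈ C, mixView Mst M1 Mout n
          (Function.update (fun i => if i < j then U else dirac (y i)) t (dirac x')) t p
        + δ := by
    intro j
    induction j with
    | zero =>
      intro y x x' C
      have e : ∀ ξ : X, Function.update (fun i => if i < 0 then U else dirac (y i)) t (dirac ξ)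
          = fun i => dirac (Function.update y t ξ i) := by
        intro ξ
        funext i
        rcases eq_or_ne i t with h | h
        · subst h; rw [Function.update_self, Function.update_self]
        · rw [Function.update_of_ne h, Function.update_of_ne h]
          simp
      rw [e x, e x', mixView_delta, mixView_delta]
      exact hpan t ht _ _ ⟨t, fun i hi => by
        rw [Function.update_of_ne hi, Function.update_of_ne hi]⟩ C
    | succ j ih =>
      intro y x x' C
      rcases eq_or_ne j t with hjt | hjt
      · subst hjt
        have e : ∀ ξ : X,
            Function.update (fun i => if i < j + 1 then U else dirac (y i)) j (dirac ξ)
            = Function.update (fun i => if i < j then U else dirac (y i)) j (dirac ξ) := by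
          intro ξ
          funext i
          rcases eq_or_ne i j with h | h
          · subst h; rw [Function.update_self, Function.update_self]
          · rw [Function.update_of_ne h, Function.update_of_ne h]
            have : i < j + 1 ↔ i < j := by omega
            simp [this]
        rw [e x, e x']
        exact ih y x x' C
      · set qj1 : ℕ → X → ℝ := fun i => if i < j + 1 then U else dirac (y i) with hqj1
        have hcoeff : ∀ ξ : X, ∀ z : X,
            (Function.update qj1 t (dirac ξ)) j z = U z := by
          intro ξ z
          rw [Function.update_of_ne hjt]
          simp [hqj1]
        have hsum : ∀ ξ : X, ∑ z, (Function.update qj1 t (dirac ξ)) j z = 1 := by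
          intro ξ
          rw [Finset.sum_congr rfl fun z _ => hcoeff ξ z]
          exact hU1
        have key : ∀ ξ z : X,
            Function.update (Function.update qj1 t (dirac ξ)) j (dirac z)
            = Function.update
                (fun i => if i < j then U else dirac (Function.update y j z i)) t (dirac ξ) := by
          intro ξ z
          funext i
          rcases eq_or_ne i j with h | h
          · subst h
            rw [Function.update_self, Function.update_of_ne hjt, if_neg (by omega),
              Function.update_self]
          · rw [Function.update_of_ne h]
            rcases eq_or_ne i t with h2 | h2
            · subst h2; rw [Function.update_self, Function.update_self]
            · rw [Function.update_of_ne h2, Function.update_of_ne h2, hqj1]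
              simp only
              rcases Nat.lt_or_ge i j with h3 | h3
              · rw [if_pos (by omega), if_pos h3]
              · rw [if_neg (by omega), if_neg (by omega), Function.update_of_ne h]
        have expand : ∀ ξ : X, ∑ p ∈ C, mixView Mst M1 Mout n
            (Function.update qj1 t (dirac ξ)) t p
            = ∑ z, U z * ∑ p ∈ C, mixView Mst M1 Mout n
              (Function.update
                (fun i => if i < j then U else dirac (Function.update y j z i)) t (dirac ξ)) t p := by
          intro ξ
          have e1 : ∀ p ∈ C, mixView Mst M1 Mout n (Function.update qj1 t (dirac ξ)) t p
              = ∑ z, U z * mixView Mst M1 Mout n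
                (Function.update
                  (fun i => if i < j then U else dirac (Function.update y j z i)) t (dirac ξ)) t p := by
            intro p _
            rw [mixView_linear Mst M1 Mout n _ j t (hsum ξ) p]
            exact Finset.sum_congr rfl fun z _ => by rw [hcoeff ξ z, key ξ z]
          rw [Finset.sum_congr rfl e1, Finset.sum_comm]
          exact Finset.sum_congr rfl fun z _ => by rw [Finset.mul_sum]
        rw [expand x, expand x']
        calc ∑ z, U z * ∑ p ∈ C, mixView Mst M1 Mout n
              (Function.update
                (fun i => if i < j then U else dirac (Function.update y j z i)) t (dirac x)) t p
            ≤ ∑ z, U z * (Real.exp ε * ∑ p ∈ C, mixView Mst M1 Mout n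
              (Function.update
                (fun i => if i < j then U else dirac (Function.update y j z i)) t (dirac x')) t p
              + δ) := by
              apply Finset.sum_le_sum
              intro z _
              exact mul_le_mul_of_nonneg_left (ih (Function.update y j z) x x' C) (hU0 z)
          _ = Real.exp ε * ∑ z, U z * ∑ p ∈ C, mixView Mst M1 Mout n
              (Function.update
                (fun i => if i < j then U else dirac (Function.update y j z i)) t (dirac x')) t p
              + δ := by
              rw [Finset.sum_congr rfl fun z _ => mul_add (U z) _ _, Finset.sum_add_distrib]
              rw [← Finset.sum_mul, hU1, one_mul]
              rw [Finset.mul_sum]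
              congr 1
              exact Finset.sum_congr rfl fun z _ => by ring
  have final := claim n (fun _ => y0) x x' C
  have e : ∀ ξ : X,
      mixView Mst M1 Mout n
        (Function.update (fun i => if i < n then U else dirac y0) t (dirac ξ)) t
      = mixView Mst M1 Mout n (Function.update (fun _ => U) t (dirac ξ)) t := by
    intro ξ
    refine mixView_congr Mst M1 Mout n (by omega) _ _ t (by omega) ?_
    intro i hi
    rcases eq_or_ne i t with h | h
    · subst h; rw [Function.update_self, Function.update_self]
    · rw [Function.update_of_ne h, Function.update_of_ne h, if_pos hi]
  have e2 : ∀ ξ : X,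
      ∑ p ∈ C, mixView Mst M1 Mout n
        (Function.update (fun i => if i < n then U else dirac y0) t (dirac ξ)) t p
      = ∑ p ∈ C, mixView Mst M1 Mout n
        (Function.update (fun _ => U) t (dirac ξ)) t p := fun ξ =>
    Finset.sum_congr rfl fun p _ => by rw [e ξ]
  rw [e2 x, e2 x'] at final
  exact final

/-- The single-input mechanism: state at time `t` with other inputs from `U`. -/
noncomputable def Amech (U : X → ℝ) (t : ℕ) : X → S → ℝ :=
  fun x s => stateDist M1 Mst (Function.update (fun _ => U) t (dirac x)) t s

lemma update_dirac_isDist (U : X → ℝ) (hU : IsDist U) (t : ℕ) (x : X) (i : ℕ) :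
    IsDist (Function.update (fun _ : ℕ => U) t (dirac x) i) := by
  rcases eq_or_ne i t with h | h
  · subst h; rw [Function.update_self]; exact dirac_isDist x
  · rw [Function.update_of_ne h]; exact hU

lemma Amech_isDist (hM1 : ∀ x, IsDist (M1 x)) (hMst : ∀ i s x, IsDist (Mst i s x))
    (U : X → ℝ) (hU : IsDist U) (t : ℕ) (x : X) : IsDist (Amech Mst M1 U t x) := by
  constructor
  · intro s
    exact stateDist_nonneg Mst M1 hM1 hMst _
      (fun i x' => (update_dirac_isDist U hU t x i).1 x') t s
  · exact stateDist_sum Mst M1 hM1 hMst _ (fun i => update_dirac_isDist U hU t x i) t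

lemma mix_marg (hMst : ∀ i s x, IsDist (Mst i s x)) (hMout : ∀ s, IsDist (Mout s))
    (n : ℕ) (q : ℕ → X → ℝ) (hq : ∀ i, IsDist (q i)) (t : ℕ) (C : Finset S) :
    ∑ p ∈ C ×ˢ (Finset.univ : Finset O), mixView Mst M1 Mout n q t p
      = ∑ s ∈ C, stateDist M1 Mst q t s := by
  rw [Finset.sum_product]
  refine Finset.sum_congr rfl fun s _ => ?_
  show ∑ o, stateDist M1 Mst q t s * ∑ sf, mFwd Mst q t s (n-1-t) sf * Mout sf o = _
  rw [← Finset.mul_sum]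
  have : ∑ o, ∑ sf, mFwd Mst q t s (n-1-t) sf * Mout sf o = 1 := by
    rw [Finset.sum_comm]
    have e : ∀ sf : S, ∑ o, mFwd Mst q t s (n-1-t) sf * Mout sf o
        = mFwd Mst q t s (n-1-t) sf := fun sf => by
      rw [← Finset.mul_sum, (hMout sf).2, mul_one]
    rw [Finset.sum_congr rfl fun sf _ => e sf]
    exact mFwd_sum Mst hMst q hq t s (n-1-t)
  rw [this, mul_one]

lemma Amech_dp (hMst : ∀ i s x, IsDist (Mst i s x)) (hMout : ∀ s, IsDist (Mout s))
    (n : ℕ) (ε δ : ℝ) (hpan : PanPrivate M1 Mst Mout n ε δ)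
    (U : X → ℝ) (hU : IsDist U) (t : ℕ) (ht : t < n) (y0 : X) :
    IsDP (Amech Mst M1 U t) ε δ := by
  intro x x' C
  have h := mix_dp Mst M1 Mout n ε δ hpan U hU.1 hU.2 t ht y0 x x'
    (C ×ˢ (Finset.univ : Finset O))
  rw [mix_marg Mst M1 Mout hMst hMout n _ (update_dirac_isDist U hU t x) t C,
    mix_marg Mst M1 Mout hMst hMout n _ (update_dirac_isDist U hU t x') t C] at h
  exact h

lemma out_decomp (n : ℕ) (q : ℕ → X → ℝ) (t : ℕ) (ht : t ≤ n - 1) (o : O) :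
    ∑ sf, stateDist M1 Mst q (n-1) sf * Mout sf o
      = ∑ s, stateDist M1 Mst q t s *
          ∑ sf, mFwd Mst q t s (n-1-t) sf * Mout sf o := by
  rw [swap_helper (fun s => stateDist M1 Mst q t s)
    (fun s sf => mFwd Mst q t s (n-1-t) sf) (fun sf => Mout sf o)]
  refine Finset.sum_congr rfl fun sf _ => ?_
  rw [stateDist_mFwd Mst M1 q t (n-1-t) sf]
  congr 2
  omega

lemma stateDist_as_mix (U : X → ℝ) (q : ℕ → X → ℝ) (t : ℕ)
    (h : ∀ i < t, q i = U) (s : S) :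
    stateDist M1 Mst q t s = ∑ x, q t x * Amech Mst M1 U t x s := by
  rw [← stateDist_linear Mst M1 q t t (le_refl t) s]
  refine Finset.sum_congr rfl fun x _ => ?_
  congr 1
  show stateDist M1 Mst (Function.update q t (dirac x)) t s = Amech Mst M1 U t x s
  unfold Amech
  have e : stateDist M1 Mst (Function.update q t (dirac x)) t
      = stateDist M1 Mst (Function.update (fun _ => U) t (dirac x)) t := by
    refine stateDist_congr Mst M1 _ _ t ?_
    intro i hi
    rcases eq_or_ne i t with h2 | h2
    · subst h2; rw [Function.update_self, Function.update_self]
    · rw [Function.update_of_ne h2, Function.update_of_ne h2, h i (by omega)]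
  rw [e]

lemma telescope_abs {O : Type*} [Fintype O] (f : ℕ → O → ℝ) (m : ℕ) :
    ∑ o, |f 0 o - f m o| ≤ ∑ t ∈ Finset.range m, ∑ o, |f t o - f (t+1) o| := by
  induction m with
  | zero => simp
  | succ m ih =>
    rw [Finset.sum_range_succ]
    calc ∑ o, |f 0 o - f (m+1) o|
        ≤ ∑ o, (|f 0 o - f m o| + |f m o - f (m+1) o|) :=
          Finset.sum_le_sum fun o _ => abs_sub_le _ _ _
      _ = ∑ o, |f 0 o - f m o| + ∑ o, |f m o - f (m+1) o| := Finset.sum_add_distrib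
      _ ≤ _ := add_le_add_left ih _

section Main

variable {V : Type} [Fintype V] (P : V → X → ℝ) (U : X → ℝ)

/-- marginal state distribution at time `t` under all-`U` inputs -/
noncomputable def Bmar (t : ℕ) (s : S) : ℝ := ∑ x, U x * Amech Mst M1 U t x s

/-- joint distribution of (state at `t`, V) -/
noncomputable def Jjoint (t : ℕ) : S × V → ℝ :=
  fun p => (1 / (Fintype.card V : ℝ)) * ∑ x, P p.2 x * Amech Mst M1 U t x p.1

/-- hybrid input distributions -/
noncomputable def Qhyb (t : ℕ) (v : V) : ℕ → X → ℝ := fun i => if i < t then U else P v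

/-- hybrid output distributions -/
noncomputable def Hyb (n t : ℕ) : O → ℝ :=
  fun o => (1 / (Fintype.card V : ℝ)) *
    ∑ v, ∑ s, stateDist M1 Mst (Qhyb P U t v) (n-1) s * Mout s o

variable [Nonempty V]

lemma card_V_pos : (0:ℝ) < (Fintype.card V : ℝ) := by
  exact_mod_cast Fintype.card_pos

lemma Qhyb_isDist (hP : ∀ v, IsDist (P v)) (hUd : IsDist U) (t : ℕ) (v : V) (i : ℕ) :
    IsDist (Qhyb P U t v i) := by
  unfold Qhyb
  split
  · exact hUd
  · exact hP v

lemma Jjoint_sum (hM1 : ∀ x, IsDist (M1 x)) (hMst : ∀ i s x, IsDist (Mst i s x))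
    (hP : ∀ v, IsDist (P v)) (hUd : IsDist U) (t : ℕ) :
    ∑ p : S × V, Jjoint Mst M1 P U t p = 1 := by
  unfold Jjoint
  rw [Fintype.sum_prod_type]
  rw [Finset.sum_comm]
  have e : ∀ v : V, ∑ s : S, (1 / (Fintype.card V : ℝ)) *
      ∑ x, P v x * Amech Mst M1 U t x s = 1 / (Fintype.card V : ℝ) := by
    intro v
    rw [← Finset.mul_sum, Finset.sum_comm]
    have : ∀ x : X, ∑ s : S, P v x * Amech Mst M1 U t x s = P v x := fun x => by
      rw [← Finset.mul_sum, (Amech_isDist Mst M1 hM1 hMst U hUd t x).2, mul_one]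
    rw [Finset.sum_congr rfl fun x _ => this x, (hP v).2, mul_one]
  rw [Finset.sum_congr rfl fun v _ => e v, Finset.sum_const, Finset.card_univ, nsmul_eq_mul]
  rw [mul_one_div, div_self (card_V_pos (V := V)).ne']

lemma Jjoint_margR (hU : ∀ x, U x = (1 / (Fintype.card V : ℝ)) * ∑ v, P v x)
    (t : ℕ) (s : S) :
    ∑ b : V, Jjoint Mst M1 P U t (s, b) = Bmar Mst M1 U t s := by
  unfold Jjoint Bmar
  have e : ∀ b : V, (1 / (Fintype.card V : ℝ)) * ∑ x, P b x * Amech Mst M1 U t x s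
      = ∑ x, (1 / (Fintype.card V : ℝ)) * P b x * Amech Mst M1 U t x s := by
    intro b
    rw [Finset.mul_sum]
    exact Finset.sum_congr rfl fun x _ => by ring
  rw [Finset.sum_congr rfl fun b _ => e b, Finset.sum_comm]
  refine Finset.sum_congr rfl fun x _ => ?_
  rw [← Finset.sum_mul, hU x, Finset.mul_sum]

lemma Jjoint_margV (hM1 : ∀ x, IsDist (M1 x)) (hMst : ∀ i s x, IsDist (Mst i s x))
    (hP : ∀ v, IsDist (P v)) (hUd : IsDist U) (t : ℕ) (v : V) :
    ∑ a : S, Jjoint Mst M1 P U t (a, v) = 1 / (Fintype.card V : ℝ) := by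
  unfold Jjoint
  rw [← Finset.mul_sum, Finset.sum_comm]
  have : ∀ x : X, ∑ s : S, P v x * Amech Mst M1 U t x s = P v x := fun x => by
    rw [← Finset.mul_sum, (Amech_isDist Mst M1 hM1 hMst U hUd t x).2, mul_one]
  rw [Finset.sum_congr rfl fun x _ => this x, (hP v).2, mul_one]

lemma step_bound (hM1 : ∀ x, IsDist (M1 x)) (hMst : ∀ i s x, IsDist (Mst i s x))
    (hMout : ∀ s, IsDist (Mout s)) (hP : ∀ v, IsDist (P v)) (hUd : IsDist U)
    (n t : ℕ) (ht : t < n) :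
    ∑ o, |Hyb Mst M1 Mout P U n t o - Hyb Mst M1 Mout P U n (t+1) o|
      ≤ ∑ p : S × V,
          |Jjoint Mst M1 P U t p - Bmar Mst M1 U t p.1 * (1 / (Fintype.card V : ℝ))| := by
  set w : ℝ := 1 / (Fintype.card V : ℝ) with hw
  have hw0 : 0 < w := by
    rw [hw]; positivity
  set K : V → S → O → ℝ :=
    fun v s o => ∑ sf, mFwd Mst (Qhyb P U t v) t s (n-1-t) sf * Mout sf o with hKdef
  set a : V → S → ℝ := fun v s => ∑ x, P v x * Amech Mst M1 U t x s with hadef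
  have hK0 : ∀ v s o, 0 ≤ K v s o := by
    intro v s o
    refine Finset.sum_nonneg fun sf _ => mul_nonneg ?_ ((hMout sf).1 o)
    exact mFwd_nonneg Mst hMst _ (fun i x => (Qhyb_isDist P U hP hUd t v i).1 x) t s _ sf
  have hK1 : ∀ v s, ∑ o, K v s o = 1 := by
    intro v s
    rw [hKdef]
    simp only
    rw [Finset.sum_comm]
    have e : ∀ sf : S, ∑ o, mFwd Mst (Qhyb P U t v) t s (n-1-t) sf * Mout sf o
        = mFwd Mst (Qhyb P U t v) t s (n-1-t) sf := fun sf => by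
      rw [← Finset.mul_sum, (hMout sf).2, mul_one]
    rw [Finset.sum_congr rfl fun sf _ => e sf]
    exact mFwd_sum Mst hMst _ (Qhyb_isDist P U hP hUd t v) t s (n-1-t)
  have hKcongr : ∀ v s, mFwd Mst (Qhyb P U (t+1) v) t s (n-1-t)
      = mFwd Mst (Qhyb P U t v) t s (n-1-t) := by
    intro v s
    refine mFwd_congr Mst _ _ t s (n-1-t) fun i h1 h2 => ?_
    unfold Qhyb
    rw [if_neg (by omega), if_neg (by omega)]
  have hOut1 : ∀ (v : V) (o : O),
      ∑ s, stateDist M1 Mst (Qhyb P U t v) (n-1) s * Mout s o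
        = ∑ s, a v s * K v s o := by
    intro v o
    rw [out_decomp Mst M1 Mout n (Qhyb P U t v) t (by omega) o]
    refine Finset.sum_congr rfl fun s _ => ?_
    congr 1
    rw [stateDist_as_mix Mst M1 U (Qhyb P U t v) t
      (fun i hi => by unfold Qhyb; rw [if_pos hi]) s]
    rw [hadef]
    refine Finset.sum_congr rfl fun x _ => ?_
    congr 1
    unfold Qhyb
    rw [if_neg (lt_irrefl t)]
  have hOut2 : ∀ (v : V) (o : O),
      ∑ s, stateDist M1 Mst (Qhyb P U (t+1) v) (n-1) s * Mout s o
        = ∑ s, Bmar Mst M1 U t s * K v s o := by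
    intro v o
    rw [out_decomp Mst M1 Mout n (Qhyb P U (t+1) v) t (by omega) o]
    refine Finset.sum_congr rfl fun s _ => ?_
    rw [hKcongr v s]
    congr 1
    rw [stateDist_as_mix Mst M1 U (Qhyb P U (t+1) v) t
      (fun i hi => by unfold Qhyb; rw [if_pos (by omega)]) s]
    unfold Bmar
    refine Finset.sum_congr rfl fun x _ => ?_
    congr 1
    unfold Qhyb
    rw [if_pos (by omega)]
  have hdiff : ∀ o : O, Hyb Mst M1 Mout P U n t o - Hyb Mst M1 Mout P U n (t+1) o
      = w * ∑ v, ∑ s, (a v s - Bmar Mst M1 U t s) * K v s o := by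
    intro o
    unfold Hyb
    rw [← hw, ← mul_sub, ← Finset.sum_sub_distrib]
    congr 1
    refine Finset.sum_congr rfl fun v _ => ?_
    rw [hOut1 v o, hOut2 v o, ← Finset.sum_sub_distrib]
    exact Finset.sum_congr rfl fun s _ => by ring
  calc ∑ o, |Hyb Mst M1 Mout P U n t o - Hyb Mst M1 Mout P U n (t+1) o|
      ≤ ∑ o, w * ∑ v, ∑ s, |a v s - Bmar Mst M1 U t s| * K v s o := by
        refine Finset.sum_le_sum fun o _ => ?_
        rw [hdiff o, abs_mul, abs_of_pos hw0]
        refine mul_le_mul_of_nonneg_left ?_ hw0.le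
        refine le_trans (Finset.abs_sum_le_sum_abs _ _) ?_
        refine Finset.sum_le_sum fun v _ => ?_
        refine le_trans (Finset.abs_sum_le_sum_abs _ _) ?_
        refine Finset.sum_le_sum fun s _ => ?_
        rw [abs_mul, abs_of_nonneg (hK0 v s o)]
    _ = w * ∑ v, ∑ s, |a v s - Bmar Mst M1 U t s| := by
        rw [← Finset.mul_sum]
        congr 1
        rw [Finset.sum_comm]
        refine Finset.sum_congr rfl fun v _ => ?_
        rw [Finset.sum_comm]
        refine Finset.sum_congr rfl fun s _ => ?_
        rw [← Finset.mul_sum, hK1 v s, mul_one]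
    _ = ∑ v, ∑ s, |Jjoint Mst M1 P U t (s, v) - Bmar Mst M1 U t s * w| := by
        rw [Finset.mul_sum]
        refine Finset.sum_congr rfl fun v _ => ?_
        rw [Finset.mul_sum]
        refine Finset.sum_congr rfl fun s _ => ?_
        have e : w * (a v s - Bmar Mst M1 U t s)
            = Jjoint Mst M1 P U t (s, v) - Bmar Mst M1 U t s * w := by
          unfold Jjoint
          rw [← hw, hadef]
          ring
        rw [← e, abs_mul, abs_of_pos hw0]
    _ = ∑ p : S × V,
          |Jjoint Mst M1 P U t p - Bmar Mst M1 U t p.1 * w| := by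
        rw [Fintype.sum_prod_type, Finset.sum_comm]

end Main

end Framework

/-- If every `(ε,δ)`-DP single-input randomized map `M : X → R` satisfies
`I(M(P_V); V) ≤ I₀`, then every `(ε,δ)`-pan-private online algorithm `M` on streams
of length `n` satisfies `dTV(M(P_V^n), M(U^n)) ≤ n·√(I₀/2)`. -/
theorem stmt_17 {X S O V : Type} [Fintype X] [Fintype S] [Fintype O] [Fintype V]
    [Nonempty V] [DecidableEq X] [DecidableEq S]
    (n : ℕ) (hn : 1 ≤ n) (ε δ : ℝ) (hε : 0 ≤ ε) (hδ : 0 ≤ δ)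
    (M1 : X → S → ℝ) (hM1 : ∀ x, IsDist (M1 x))
    (Mst : ℕ → S → X → S → ℝ) (hMst : ∀ i s x, IsDist (Mst i s x))
    (Mout : S → O → ℝ) (hMout : ∀ s, IsDist (Mout s))
    (P : V → X → ℝ) (hP : ∀ v, IsDist (P v))
    (U : X → ℝ) (hU : U = fun x => (1 / (Fintype.card V : ℝ)) * ∑ v, P v x)
    (I₀ : ℝ) (hI₀ : 0 ≤ I₀)
    (hDPinfo : ∀ (R : Type) [Fintype R], ∀ M : X → R → ℝ,
      (∀ x, IsDist (M x)) → IsDP M ε δ →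
      mutualInfo (fun p : R × V =>
        (1 / (Fintype.card V : ℝ)) * ∑ x, P p.2 x * M x p.1) ≤ I₀)
    (hpan : PanPrivate M1 Mst Mout n ε δ) :
    dTV
      (fun o => (1 / (Fintype.card V : ℝ)) * ∑ v,
        ∑ s, stateDist M1 Mst (fun _ => P v) (n - 1) s * Mout s o)
      (fun o => ∑ s, stateDist M1 Mst (fun _ => U) (n - 1) s * Mout s o) ≤
      n * Real.sqrt (I₀ / 2) := by
  have hc : (0:ℝ) < (Fintype.card V : ℝ) := card_V_pos (V := V)
  have hU' : ∀ x, U x = (1 / (Fintype.card V : ℝ)) * ∑ v, P v x := fun x => by rw [hU]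
  have hUd : IsDist U := by
    constructor
    · intro x
      rw [hU' x]
      exact mul_nonneg (by positivity) (Finset.sum_nonneg fun v _ => (hP v).1 x)
    · rw [Finset.sum_congr rfl fun x _ => hU' x, ← Finset.mul_sum, Finset.sum_comm,
        Finset.sum_congr rfl fun v (_ : v ∈ Finset.univ) => (hP v).2,
        Finset.sum_const, Finset.card_univ, nsmul_eq_mul, mul_one]
      rw [one_div, inv_mul_cancel₀ hc.ne']
  have hXne : Nonempty X := by
    by_contra h
    have hE := not_nonempty_iff.mp h
    have h2 := (hP (Classical.arbitrary V)).2
    rw [Finset.univ_eq_empty, Finset.sum_empty] at h2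
    norm_num at h2
  obtain ⟨y0⟩ := hXne
  -- per-step bound
  have hstep : ∀ t, t < n →
      ∑ o, |Hyb Mst M1 Mout P U n t o - Hyb Mst M1 Mout P U n (t+1) o|
        ≤ Real.sqrt (2 * I₀) := by
    intro t ht
    refine le_trans (step_bound Mst M1 Mout P U hM1 hMst hMout hP hUd n t ht) ?_
    have hj0 : ∀ p, 0 ≤ Jjoint Mst M1 P U t p := by
      intro p
      refine mul_nonneg (by positivity) (Finset.sum_nonneg fun x _ => ?_)
      exact mul_nonneg ((hP p.2).1 x) ((Amech_isDist Mst M1 hM1 hMst U hUd t x).1 p.1)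
    have hj1 := Jjoint_sum Mst M1 P U hM1 hMst hP hUd t
    have hpk := pinsker_mi (Jjoint Mst M1 P U t) hj0 hj1
    have hmargs : ∀ p : S × V,
        (∑ b, Jjoint Mst M1 P U t (p.1, b)) * (∑ a, Jjoint Mst M1 P U t (a, p.2))
          = Bmar Mst M1 U t p.1 * (1 / (Fintype.card V : ℝ)) := by
      intro p
      rw [Jjoint_margR Mst M1 P U hU' t p.1, Jjoint_margV Mst M1 P U hM1 hMst hP hUd t p.2]
    have e : ∑ p : S × V, |Jjoint Mst M1 P U t p -
        (∑ b, Jjoint Mst M1 P U t (p.1, b)) * (∑ a, Jjoint Mst M1 P U t (a, p.2))|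
        = ∑ p : S × V, |Jjoint Mst M1 P U t p -
            Bmar Mst M1 U t p.1 * (1 / (Fintype.card V : ℝ))| :=
      Finset.sum_congr rfl fun p _ => by rw [hmargs p]
    rw [e] at hpk
    have hmi : mutualInfo (Jjoint Mst M1 P U t) ≤ I₀ :=
      hDPinfo S (Amech Mst M1 U t) (fun x => Amech_isDist Mst M1 hM1 hMst U hUd t x)
        (Amech_dp Mst M1 Mout hMst hMout n ε δ hpan U hUd t ht y0)
    set D := ∑ p : S × V, |Jjoint Mst M1 P U t p -
        Bmar Mst M1 U t p.1 * (1 / (Fintype.card V : ℝ))| with hD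
    have hD0 : 0 ≤ D := Finset.sum_nonneg fun p _ => abs_nonneg _
    calc D = Real.sqrt (D^2) := (Real.sqrt_sq hD0).symm
      _ ≤ Real.sqrt (2 * I₀) := Real.sqrt_le_sqrt (by nlinarith)
  -- telescoping
  have htel := telescope_abs (fun t => Hyb Mst M1 Mout P U n t) n
  have hsum : ∑ t ∈ Finset.range n,
      ∑ o, |Hyb Mst M1 Mout P U n t o - Hyb Mst M1 Mout P U n (t+1) o|
        ≤ n * Real.sqrt (2 * I₀) := by
    refine le_trans (Finset.sum_le_sum fun t ht' => hstep t (Finset.mem_range.mp ht')) ?_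
    rw [Finset.sum_const, Finset.card_range, nsmul_eq_mul]
  -- endpoints
  have h0 : ∀ o, Hyb Mst M1 Mout P U n 0 o
      = (1 / (Fintype.card V : ℝ)) * ∑ v,
          ∑ s, stateDist M1 Mst (fun _ => P v) (n - 1) s * Mout s o := by
    intro o
    unfold Hyb
    congr 1
  have hnn : ∀ o, Hyb Mst M1 Mout P U n n o
      = ∑ s, stateDist M1 Mst (fun _ => U) (n - 1) s * Mout s o := by
    intro o
    unfold Hyb
    have e : ∀ v : V, ∑ s, stateDist M1 Mst (Qhyb P U n v) (n-1) s * Mout s o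
        = ∑ s, stateDist M1 Mst (fun _ => U) (n-1) s * Mout s o := by
      intro v
      refine Finset.sum_congr rfl fun s _ => ?_
      congr 1
      rw [stateDist_congr Mst M1 (Qhyb P U n v) (fun _ => U) (n-1)
        (fun i hi => by unfold Qhyb; rw [if_pos (by omega)])]
    rw [Finset.sum_congr rfl fun v _ => e v, Finset.sum_const, Finset.card_univ,
      nsmul_eq_mul, ← mul_assoc, one_div, inv_mul_cancel₀ hc.ne', one_mul]
  -- conclusion
  unfold dTV
  have efg : ∑ o, |(1 / (Fintype.card V : ℝ)) * (∑ v,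
        ∑ s, stateDist M1 Mst (fun _ => P v) (n - 1) s * Mout s o) -
        ∑ s, stateDist M1 Mst (fun _ => U) (n - 1) s * Mout s o|
      = ∑ o, |Hyb Mst M1 Mout P U n 0 o - Hyb Mst M1 Mout P U n n o| :=
    Finset.sum_congr rfl fun o _ => by rw [h0 o, hnn o]
  rw [efg]
  have hfinal : ∑ o, |Hyb Mst M1 Mout P U n 0 o - Hyb Mst M1 Mout P U n n o|
      ≤ n * Real.sqrt (2 * I₀) := le_trans htel hsum
  have hsqrt : Real.sqrt (I₀ / 2) = Real.sqrt (2 * I₀) / 2 := by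
    rw [show I₀ / 2 = (2 * I₀) / 4 by ring,
      show (4:ℝ) = 2^2 by norm_num]
    rw [Real.sqrt_div (by linarith) (2^2), Real.sqrt_sq (by norm_num)]
  rw [hsqrt]
  have : (n:ℝ) * (Real.sqrt (2*I₀) / 2) = (1/2) * (n * Real.sqrt (2*I₀)) := by ring
  rw [this]
  have h2 : (0:ℝ) < 1/2 := by norm_num
  linarith [mul_le_mul_of_nonneg_left hfinal h2.le]
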